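/- The fusion matrices commute: for all a, b, c, d ∈ 𝒞, ∑_i N_{ac}^i N_{bi}^d = ∑_i N_{bc}^i N_{ai}^d. -/

import Mathlib

/-- Commutativity of the fusion matrices. -/
theorem verlinde_stmt12 {𝒞 : Type*} [Fintype 𝒞] [DecidableEq 𝒞]
    (one : 𝒞) (bar : 𝒞 → 𝒞)
    (hbar_one : bar one = one) (hbar_invol : ∀ a, bar (bar a) = a)
    (N : 𝒞 → 𝒞 → 𝒞 → ℕ)
    (hN_vac : ∀ a b, N a b one = if b = bar a then 1 else 0)
    (S : 𝒞 → 𝒞 → ℂ)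
    (hS_sym : ∀ a b, S a b = S b a)
    (hS_conj : ∀ a b, S a b = (starRingEnd ℂ) (S (bar a) b))
    (hS_nd : ∀ x, S one x ≠ 0)
    (hfus : ∀ a b x, ∑ c, (N a b c : ℂ) * S c x = S a x * S b x / S one x)
    (hvac : ∀ a, ∑ x, S one x * S a x = if a = one then 1 else 0) :
    ∀ a b c d, ∑ i, N a c i * N b i d = ∑ i, N b c i * N a i d := by
  -- Full orthogonality: ∑ x, S a x * S b x = δ_{b, bar a}
  have horth : ∀ a b : 𝒞, ∑ x, S a x * S b x = if b = bar a then 1 else 0 := by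
    intro a b
    calc ∑ x, S a x * S b x
        = ∑ x, S one x * (S a x * S b x / S one x) := by
          exact Finset.sum_congr rfl fun x _ => by rw [← mul_div_assoc, mul_div_cancel_left₀ _ (hS_nd x)]
      _ = ∑ x, S one x * ∑ e, (N a b e : ℂ) * S e x := by
          simp_rw [hfus]
      _ = ∑ e, (N a b e : ℂ) * ∑ x, S one x * S e x := by
          simp_rw [Finset.mul_sum]
          rw [Finset.sum_comm]
          refine Finset.sum_congr rfl fun e _ => Finset.sum_congr rfl fun x _ => by ring
      _ = ∑ e, (N a b e : ℂ) * (if e = one then 1 else 0) := by simp_rw [hvac]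
      _ = (N a b one : ℂ) := by simp
      _ = if b = bar a then 1 else 0 := by rw [hN_vac]; split <;> simp
  intro a b c d
  -- Key: express the N-sum in terms of S.
  have key : ∀ p q : 𝒞, ((∑ i, N p c i * N q i d : ℕ) : ℂ)
      = ∑ x, (S p x * S q x * S c x / (S one x) ^ 2) * S (bar d) x := by
    intro p q
    have h2 : ∀ x, ∑ e, (∑ i, (N p c i : ℂ) * N q i e) * S e x
        = S p x * S q x * S c x / (S one x) ^ 2 := by
      intro x
      have step1 : ∑ e, (∑ i, (N p c i : ℂ) * N q i e) * S e x
          = ∑ i, (N p c i : ℂ) * ∑ e, (N q i e : ℂ) * S e x := by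
        simp_rw [Finset.sum_mul, Finset.mul_sum]
        rw [Finset.sum_comm]
        exact Finset.sum_congr rfl fun i _ => Finset.sum_congr rfl fun e _ => by ring
      rw [step1]
      simp_rw [hfus]
      have step2 : ∑ i, (N p c i : ℂ) * (S q x * S i x / S one x)
          = (S q x / S one x) * ∑ i, (N p c i : ℂ) * S i x := by
        rw [Finset.mul_sum]
        exact Finset.sum_congr rfl fun i _ => by ring
      rw [step2, hfus]
      have := hS_nd x
      field_simp
    calc ((∑ i, N p c i * N q i d : ℕ) : ℂ)
        = ∑ e, (∑ i, (N p c i : ℂ) * N q i e) * (if bar d = bar e then 1 else 0) := by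
          have hcond : ∀ e : 𝒞, (if bar d = bar e then (1:ℂ) else 0) = if e = d then 1 else 0 := by
            intro e
            by_cases h : e = d
            · simp [h]
            · have : bar d ≠ bar e := fun hh => h (by rw [← hbar_invol e, ← hh, hbar_invol])
              simp [h, this]
          push_cast
          simp [hcond]
      _ = ∑ e, (∑ i, (N p c i : ℂ) * N q i e) * ∑ x, S e x * S (bar d) x := by
          simp_rw [horth]
      _ = ∑ x, (∑ e, (∑ i, (N p c i : ℂ) * N q i e) * S e x) * S (bar d) x := by
          simp_rw [Finset.mul_sum, Finset.sum_mul]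
          rw [Finset.sum_comm]
          exact Finset.sum_congr rfl fun e _ => Finset.sum_congr rfl fun x _ => Finset.sum_congr rfl fun i _ => by ring
      _ = ∑ x, (S p x * S q x * S c x / (S one x) ^ 2) * S (bar d) x := by
          simp_rw [h2]
  have : ((∑ i, N a c i * N b i d : ℕ) : ℂ) = ((∑ i, N b c i * N a i d : ℕ) : ℂ) := by
    rw [key a b, key b a]
    exact Finset.sum_congr rfl fun x _ => by ring
  exact_mod_cast this
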